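/- If N = p_1^{2a_1} p_2^{2a_2} ⋯ p_t^{2a_t} = m^2 is a quasiperfect number (where p_1, ..., p_t are distinct primes and a_1, ..., a_t are positive integers), then there exists an index j such that p_j ≡ 1 (mod 4) and 2a_j + 1 has no divisor congruent to 5 modulo 8. -/

import Mathlib

open Finset

/-- geometric sum divisibility -/
lemma geomsum_dvd (p : ℕ) {d n : ℕ} (h : d ∣ n) :
    (∑ i ∈ range d, p ^ i) ∣ ∑ i ∈ range n, p ^ i := by
  obtain ⟨k, rfl⟩ := h
  induction k with
  | zero => simp
  | succ k ih =>
    have h1 : d * (k + 1) = d * k + d := by ring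
    rw [h1, Finset.sum_range_add]
    refine dvd_add ih ⟨p ^ (d * k), ?_⟩
    rw [Finset.sum_mul]
    exact Finset.sum_congr rfl fun i _ => by rw [pow_add, mul_comm]

/-- every divisor of 2m²+1 is 1 or 3 mod 8 -/
lemma div_mod8 (m : ℕ) : ∀ d, d ∣ 2 * m ^ 2 + 1 → d % 8 = 1 ∨ d % 8 = 3 := by
  intro d
  induction d using Nat.strong_induction_on with
  | _ d ih =>
  intro hd
  rcases eq_or_ne d 1 with rfl | hd1
  · left; rfl
  have hd0 : d ≠ 0 := by
    rintro rfl
    rw [Nat.zero_dvd] at hd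
    omega
  have hq := Nat.minFac_prime hd1
  set q := d.minFac with hqdef
  have hqd : q ∣ d := Nat.minFac_dvd d
  have hqN : q ∣ 2 * m ^ 2 + 1 := hqd.trans hd
  have hq2 : q ≠ 2 := by
    rintro h2
    rw [h2] at hqN
    obtain ⟨c, hc⟩ := hqN
    omega
  have hq8 : q % 8 = 1 ∨ q % 8 = 3 := by
    haveI : Fact q.Prime := ⟨hq⟩
    have h0 : ((2 * m ^ 2 + 1 : ℕ) : ZMod q) = 0 :=
      (ZMod.natCast_eq_zero_iff _ _).mpr hqN
    push_cast at h0
    have hsq : IsSquare (-2 : ZMod q) :=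
      ⟨2 * m, by linear_combination (-2 : ZMod q) * h0⟩
    exact (ZMod.exists_sq_eq_neg_two_iff hq2).mp hsq
  obtain ⟨e, he⟩ := hqd
  have he0 : e ≠ 0 := by rintro rfl; simp at he; exact hd0 he
  have helt : e < d := by
    rw [he]
    calc e = 1 * e := (one_mul e).symm
    _ < q * e := (Nat.mul_lt_mul_right (Nat.pos_of_ne_zero he0)).mpr hq.one_lt
  have he8 := ih e helt (dvd_trans ⟨q, by rw [he]; ring⟩ hd)
  have hmod : d % 8 = q % 8 * (e % 8) % 8 := by rw [he, Nat.mul_mod]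
  rcases hq8 with h1 | h1 <;> rcases he8 with h2 | h2 <;> rw [h1, h2] at hmod <;> omega

/-- odd geometric sums in ZMod 8 -/
lemma zmod_geom (c : ZMod 8) (hc : c ^ 2 = 1) (e : ℕ) :
    ∑ i ∈ range (2 * e + 1), c ^ i = 1 + (e : ZMod 8) * (c + c ^ 2) := by
  induction e with
  | zero => simp
  | succ e ih =>
    have h1 : 2 * (e + 1) + 1 = (2 * e + 1) + 2 := by ring
    rw [h1, Finset.sum_range_add, ih]
    have h2 : ∀ i, c ^ (2 * e + 1 + i) = c ^ i * c := by
      intro i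
      rw [pow_add, pow_add, pow_mul, hc, one_pow]
      ring
    rw [Finset.sum_congr rfl fun i _ => h2 i]
    rw [Finset.sum_range_succ, Finset.sum_range_one]
    push_cast
    ring




/-- A positive integer `N` is quasiperfect if `σ(N) = 2N + 1`. -/
def Quasiperfect (N : ℕ) : Prop :=
  0 < N ∧ ArithmeticFunction.sigma 1 N = 2 * N + 1

/-- If `N = p₁^{2a₁} ⋯ p_t^{2a_t} = m²` is quasiperfect, then there is an index `j`
with `p j ≡ 1 (mod 4)` such that `2 * a j + 1` has no divisor congruent to `5` mod `8`. -/

lemma cast_mod8 (x : ℕ) : (x : ZMod 8) = ((x % 8 : ℕ) : ZMod 8) := (ZMod.natCast_mod x 8).symm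

lemma mod8_of_cast {x : ℕ} {v : ZMod 8} (h : (x : ZMod 8) = v) : x % 8 = v.val := by
  rw [← ZMod.val_natCast, h]


theorem stmt_0 (t : ℕ) (p a : Fin t → ℕ) (N m : ℕ)
    (hp : ∀ i, (p i).Prime) (hinj : Function.Injective p)
    (ha : ∀ i, 0 < a i)
    (hN : N = ∏ i, p i ^ (2 * a i)) (hm : N = m ^ 2)
    (hq : Quasiperfect N) :
    ∃ j : Fin t, p j % 4 = 1 ∧ ∀ d : ℕ, d ∣ 2 * a j + 1 → d % 8 ≠ 5 := by
  obtain ⟨hN0, hsig⟩ := hq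
  -- key divisor lemma
  have hkey : ∀ d, d ∣ 2 * N + 1 → d % 8 = 1 ∨ d % 8 = 3 := by
    intro d hd
    exact div_mod8 m d (by rwa [← hm])
  -- sigma of prime powers
  set F : Fin t → ℕ := fun i => ∑ k ∈ Finset.range (2 * a i + 1), p i ^ k with hF
  have hsigp : ∀ i, ArithmeticFunction.sigma 1 (p i ^ (2 * a i)) = F i := by
    intro i
    rw [ArithmeticFunction.sigma_one_apply]
    rw [Nat.sum_divisors_prime_pow (hp i)]
  have hprod : 2 * N + 1 = ∏ i, F i := by
    rw [← hsig, hN, ArithmeticFunction.isMultiplicative_sigma.map_prod _ Finset.univ ?_]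
    · exact Finset.prod_congr rfl fun i _ => hsigp i
    · intro i _ j _ hij
      exact Nat.Coprime.pow _ _ ((Nat.coprime_primes (hp i) (hp j)).mpr fun h => hij (hinj h))
  have hFdvd : ∀ i, F i ∣ 2 * N + 1 := by
    intro i
    rw [hprod]
    exact Finset.dvd_prod_of_mem F (Finset.mem_univ i)
  -- all primes odd
  have hp2 : ∀ i, p i ≠ 2 := by
    intro i h2
    have hsum2 : ∀ n, ∑ k ∈ Finset.range n, 2 ^ k = 2 ^ n - 1 := by
      intro n
      induction n with
      | zero => simp
      | succ n ih =>
        rw [Finset.sum_range_succ, ih]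
        have : 0 < 2 ^ n := Nat.pow_pos (n := n) (by norm_num)
        have : 2 ^ (n + 1) = 2 * 2 ^ n := by ring
        omega
    have h8 : (8 : ℕ) ∣ 2 ^ (2 * a i + 1) := by
      have : (8 : ℕ) = 2 ^ 3 := by norm_num
      rw [this]
      exact pow_dvd_pow 2 (by have := ha i; omega)
    have hFi : F i = 2 ^ (2 * a i + 1) - 1 := by rw [hF]; simp only [h2]; exact hsum2 _
    obtain ⟨c, hc⟩ := h8
    have hpos : 0 < 2 ^ (2 * a i + 1) := Nat.pow_pos (by norm_num)
    have := hkey (F i) (hFdvd i)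
    omega
  -- 2N+1 ≡ 3 mod 8
  have hm2 : (2 * N + 1) % 8 = 3 := by
    have hNodd : ¬ 2 ∣ N := by
      rw [hN]
      intro h
      obtain ⟨i, _, hi⟩ := (Nat.prime_two.prime.dvd_finset_prod_iff _).mp h
      have := Nat.Prime.dvd_of_dvd_pow Nat.prime_two hi
      exact hp2 i ((Nat.prime_dvd_prime_iff_eq Nat.prime_two (hp i)).mp this).symm
    have hmodd : ¬ 2 ∣ m := by
      intro h
      exact hNodd (by rw [hm]; exact Dvd.dvd.pow h (by norm_num))
    obtain ⟨k, hk⟩ : ∃ k, m = 2 * k + 1 := ⟨m / 2, by omega⟩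
    obtain ⟨l, hl⟩ := Nat.even_mul_succ_self k
    have : N = 4 * (k * (k + 1)) + 1 := by rw [hm, hk]; ring
    omega
  -- cast to ZMod 8
  have h3 : ((∏ i, F i : ℕ) : ZMod 8) = 3 := by
    rw [cast_mod8, ← hprod, hm2]
    decide
  rw [Nat.cast_prod] at h3
  have hG : ∀ i, ((F i : ℕ) : ZMod 8) = 1 ∨ ((F i : ℕ) : ZMod 8) = 3 := by
    intro i
    rcases hkey (F i) (hFdvd i) with h | h <;> [left; right] <;>
      rw [cast_mod8, h] <;> decide
  -- find j with F j ≡ 3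
  have hj : ∃ j, ((F j : ℕ) : ZMod 8) = 3 := by
    by_contra hcon
    push_neg at hcon
    have hall : ∀ i, ((F i : ℕ) : ZMod 8) = 1 := fun i => (hG i).resolve_right (hcon i)
    rw [Finset.prod_congr rfl fun i _ => hall i, Finset.prod_const_one] at h3
    exact absurd h3 (by decide)
  obtain ⟨j, hj3⟩ := hj
  -- analyze p j mod 8
  set c : ZMod 8 := (p j : ZMod 8) with hcdef
  have hpodd : p j % 2 = 1 := Nat.odd_iff.mp ((hp j).odd_of_ne_two (hp2 j))
  have hr : p j % 8 = 1 ∨ p j % 8 = 3 ∨ p j % 8 = 5 ∨ p j % 8 = 7 := by omega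
  have hc2 : c ^ 2 = 1 := by
    rw [hcdef, cast_mod8 (p j)]
    rcases hr with h | h | h | h <;> rw [h] <;> decide
  have hcast : ((F j : ℕ) : ZMod 8) = 1 + (a j : ZMod 8) * (c + c ^ 2) := by
    rw [hF]
    push_cast
    exact zmod_geom c hc2 (a j)
  rw [hcast] at hj3
  -- rule out c = 3, c = 7
  have hr15 : p j % 8 = 1 ∨ p j % 8 = 5 := by
    rcases hr with h | h | h | h
    · left; exact h
    · exfalso
      rw [hcdef, cast_mod8 (p j), h] at hj3
      have : ∀ α : ZMod 8, ¬ (1 + α * (((3:ℕ) : ZMod 8) + ((3:ℕ) : ZMod 8) ^ 2) = 3) := by decide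
      exact this _ hj3
    · right; exact h
    · exfalso
      rw [hcdef, cast_mod8 (p j), h] at hj3
      have : ∀ α : ZMod 8, ¬ (1 + α * (((7:ℕ) : ZMod 8) + ((7:ℕ) : ZMod 8) ^ 2) = 3) := by decide
      exact this _ hj3
  refine ⟨j, by omega, ?_⟩
  -- final: no divisor of 2 a j + 1 is 5 mod 8
  intro d hd hd5
  obtain ⟨e, he⟩ : ∃ e, d = 2 * e + 1 := ⟨d / 2, by omega⟩
  have he4 : e % 4 = 2 := by omega
  set Q : ℕ := ∑ k ∈ Finset.range d, p j ^ k with hQ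
  have hQdvd : Q ∣ 2 * N + 1 := (geomsum_dvd (p j) hd).trans (hFdvd j)
  have hQcast : ((Q : ℕ) : ZMod 8) = 1 + (e : ZMod 8) * (c + c ^ 2) := by
    rw [hQ, he]
    push_cast
    exact zmod_geom c hc2 e
  have hQ5 : ((Q : ℕ) : ZMod 8) = 5 := by
    rw [hQcast, cast_mod8 e]
    have he8 : e % 8 = 2 ∨ e % 8 = 6 := by omega
    rcases hr15 with h | h <;> rw [hcdef, cast_mod8 (p j), h] <;>
      rcases he8 with h' | h' <;> rw [h'] <;> decide
  have := mod8_of_cast hQ5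
  have h5val : (5 : ZMod 8).val = 5 := by decide
  rw [h5val] at this
  rcases hkey Q hQdvd with h | h <;> omega
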